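/- For every integer n ≥ 1, the volume of the n-dimensional Euclidean unit ball satisfies (1/√(πn)) · (2πe/n)^{n/2} · (1 − 1/n) ≤ |Dₙ| ≤ (1/√(πn)) · (2πe/n)^{n/2}. -/

import Mathlib

open MeasureTheory

open Finset Filter Nat Real Stirling


lemma aux_log_one_sub_lb {t : ℝ} (h0 : 0 ≤ t) (h1 : t < 1) :
    t + t ^ 2 / 2 ≤ -Real.log (1 - t) := by
  have h := Real.hasSum_pow_div_log_of_abs_lt_one (x := t) (by rw [abs_of_nonneg h0]; exact h1)
  have h2 := sum_le_hasSum (Finset.range 2) (fun i _ => by positivity) h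
  rw [Finset.sum_range_succ, Finset.sum_range_one] at h2
  norm_num at h2
  linarith

lemma aux_sqrt_pi_le (k : ℕ) : Real.sqrt π ≤ stirlingSeq (k + 1) :=
  stirlingSeq'_antitone.le_of_tendsto
    (tendsto_stirlingSeq_sqrt_pi.comp (tendsto_add_atTop_nat 1)) k

-- refined diff bound
lemma aux_diff_le (j : ℕ) :
    Real.log (stirlingSeq (j + 1)) - Real.log (stirlingSeq (j + 2)) ≤
      1 / 12 * (1 / (j + 1 : ℝ) - 1 / (j + 2 : ℝ)) := by
  have ha : ((1 : ℝ) / (2 * (j + 1 : ℕ) + 1)) ^ 2 < 1 := by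
    rw [one_div, inv_pow]
    apply inv_lt_one_of_one_lt₀
    have : (1:ℝ) < 2 * ((j:ℝ) + 1) + 1 := by push_cast; nlinarith [j.cast_nonneg (α := ℝ)]
    push_cast
    nlinarith
  have h_nonneg : (0 : ℝ) ≤ ((1 : ℝ) / (2 * (j + 1 : ℕ) + 1)) ^ 2 := sq_nonneg _
  set a : ℝ := ((1 : ℝ) / (2 * (j + 1 : ℕ) + 1)) ^ 2 with ha_def
  have g : HasSum (fun k : ℕ => (1 / 3 : ℝ) * a ^ (k + 1))
      (1 / 3 * (a / (1 - a))) := by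
    have := (hasSum_geometric_of_lt_one h_nonneg ha).mul_left a
    simp_rw [← _root_.pow_succ'] at this
    exact this.mul_left (1/3)
  have hab : ∀ k : ℕ, (1 : ℝ) / (2 * (k + 1 : ℕ) + 1) * a ^ (k + 1) ≤ (1/3 : ℝ) * a ^ (k + 1) := by
    intro k
    apply mul_le_mul_of_nonneg_right _ (pow_nonneg h_nonneg _)
    rw [div_le_div_iff₀ (by positivity) (by norm_num)]
    push_cast
    nlinarith [k.cast_nonneg (α := ℝ)]
  have key := hasSum_le hab (log_stirlingSeq_diff_hasSum j) g
  refine key.trans (le_of_eq ?_)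
  have hx : (0:ℝ) < (j:ℝ) + 1 := by positivity
  have hq : (0:ℝ) < 2 * ((j:ℝ) + 1) + 1 := by positivity
  have haa : a = (1 / (2 * ((j:ℝ) + 1) + 1)) ^ 2 := by rw [ha_def]; push_cast; ring
  have hne : (0:ℝ) < 1 - a := sub_pos.mpr ha
  rw [haa] at hne ⊢
  push_cast
  field_simp
  ring_nf
  linear_combination 3 * mul_inv_cancel₀ (show (8 + (j:ℝ) * 12 + (j:ℝ) ^ 2 * 4) ≠ 0 by positivity)


lemma aux_telescope (k i : ℕ) :
    Real.log (stirlingSeq (k + 1)) - Real.log (stirlingSeq (k + i + 1)) ≤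
      1 / 12 * (1 / (k + 1 : ℝ) - 1 / (k + i + 1 : ℝ)) := by
  induction i with
  | zero => simp
  | succ i ih =>
    have h := aux_diff_le (k + i)
    have e1 : k + (i + 1) + 1 = k + i + 2 := by omega
    rw [e1]
    push_cast at *
    rw [show (k:ℝ) + (i + 1) + 1 = (k:ℝ) + i + 2 by ring]
    linarith

lemma aux_log_stirling_ub (k : ℕ) :
    Real.log (stirlingSeq (k + 1)) ≤ Real.log (Real.sqrt π) + 1 / (12 * (k + 1 : ℝ)) := by
  have hlim : Filter.Tendsto (fun i : ℕ => Real.log (stirlingSeq (k + 1)) -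
      Real.log (stirlingSeq (k + i + 1))) atTop
      (nhds (Real.log (stirlingSeq (k + 1)) - Real.log (Real.sqrt π))) := by
    apply Filter.Tendsto.const_sub
    have h1 : Filter.Tendsto (fun i : ℕ => stirlingSeq (k + i + 1)) atTop (nhds (Real.sqrt π)) := by
      have h0 : Filter.Tendsto (fun i : ℕ => stirlingSeq (i + (k + 1))) atTop
          (nhds (Real.sqrt π)) := tendsto_stirlingSeq_sqrt_pi.comp (tendsto_add_atTop_nat (k + 1))
      have he : (fun i : ℕ => stirlingSeq (k + i + 1)) = fun i : ℕ => stirlingSeq (i + (k + 1)) := by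
        funext i; congr 1; omega
      rw [he]; exact h0
    exact ((Real.continuousAt_log (by positivity)).tendsto.comp h1)
  have hb : Real.log (stirlingSeq (k + 1)) - Real.log (Real.sqrt π) ≤ 1 / (12 * (k + 1 : ℝ)) := by
    refine le_of_tendsto hlim (Filter.Eventually.of_forall fun i => ?_)
    refine (aux_telescope k i).trans ?_
    have : (0:ℝ) < (k : ℝ) + i + 1 := by positivity
    have h2 : (0:ℝ) ≤ 1 / ((k : ℝ) + i + 1) := by positivity
    rw [one_div (12 * ((k:ℝ)+1))]
    have : 1/12 * (1 / ((k:ℝ) + 1) - 1 / ((k:ℝ) + i + 1)) ≤ 1/12 * (1/((k:ℝ)+1)) := by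
      apply mul_le_mul_of_nonneg_left _ (by norm_num)
      linarith
    refine this.trans (le_of_eq ?_)
    field_simp
  linarith


lemma aux_log_fact (k : ℕ) (hk : 1 ≤ k) :
    Real.log (k !) = Real.log (stirlingSeq k) + Real.log (2 * k) / 2
      + k * (Real.log k - 1) := by
  have h0 : (0:ℝ) < k := by exact_mod_cast hk
  have := log_stirlingSeq_formula k
  rw [Real.log_div (by positivity) (Real.exp_ne_zero 1), Real.log_exp] at this
  linarith

lemma stirling_log_lb (k : ℕ) (hk : 1 ≤ k) :
    Real.log π / 2 + Real.log (2 * k) / 2 + k * (Real.log k - 1) ≤ Real.log (k !) := by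
  obtain ⟨j, rfl⟩ : ∃ j, k = j + 1 := ⟨k - 1, by omega⟩
  rw [aux_log_fact _ hk]
  have h1 := aux_sqrt_pi_le j
  have h2 : Real.log (Real.sqrt π) ≤ Real.log (stirlingSeq (j + 1)) :=
    Real.log_le_log (Real.sqrt_pos.mpr Real.pi_pos) h1
  rw [Real.log_sqrt Real.pi_pos.le] at h2
  linarith

lemma stirling_log_ub (k : ℕ) (hk : 1 ≤ k) :
    Real.log (k !) ≤ Real.log π / 2 + Real.log (2 * k) / 2 + k * (Real.log k - 1)
      + 1 / (12 * k) := by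
  obtain ⟨j, rfl⟩ : ∃ j, k = j + 1 := ⟨k - 1, by omega⟩
  rw [aux_log_fact _ hk]
  have h2 := aux_log_stirling_ub j
  rw [Real.log_sqrt Real.pi_pos.le] at h2
  push_cast
  push_cast at h2
  linarith

lemma gamma_half_odd (m : ℕ) :
    Real.Gamma ((m : ℝ) + 1 + 1 / 2) =
      Real.sqrt π * (2 * m + 1)! / (2 ^ (2 * m + 1) * m !) := by
  have h := Real.Gamma_mul_Gamma_add_half ((m : ℝ) + 1)
  have h1 : Real.Gamma ((m : ℝ) + 1) = m ! := Real.Gamma_nat_eq_factorial m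
  have h2 : Real.Gamma (2 * ((m : ℝ) + 1)) = (2 * m + 1)! := by
    rw [show 2 * ((m : ℝ) + 1) = ((2 * m + 1 : ℕ) : ℝ) + 1 by push_cast; ring]
    exact_mod_cast Real.Gamma_nat_eq_factorial (2 * m + 1)
  have h3 : (2 : ℝ) ^ (1 - 2 * ((m : ℝ) + 1)) = ((2 : ℝ) ^ (2 * m + 1 : ℕ))⁻¹ := by
    rw [show 1 - 2 * ((m : ℝ) + 1) = -((2 * m + 1 : ℕ) : ℝ) by push_cast; ring,
      Real.rpow_neg (by norm_num), Real.rpow_natCast]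
  rw [h1, h2, h3] at h
  have hm : (m ! : ℝ) ≠ 0 := by positivity
  field_simp at h ⊢
  linarith [h]


lemma log_gamma_odd (m : ℕ) :
    Real.log (Real.Gamma ((m : ℝ) + 1 + 1 / 2)) =
      Real.log π / 2 + Real.log ((2 * m + 1)!) - (2 * m + 1 : ℝ) * Real.log 2
        - Real.log (m !) := by
  rw [gamma_half_odd m, Real.log_div (by positivity) (by positivity),
    Real.log_mul (by positivity) (by positivity),
    Real.log_mul (by positivity) (by positivity),
    Real.log_sqrt Real.pi_pos.le, Real.log_pow]
  push_cast
  ring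

-- master lemma 1, odd case, m ≥ 1
lemma LM1_odd (m : ℕ) (hm : 1 ≤ m) :
    Real.log π / 2 + Real.log ((2 * m + 1 : ℕ) : ℝ) / 2
      + (((2 * m + 1 : ℕ) : ℝ) / 2) * (Real.log ((2 * m + 1 : ℕ) : ℝ) - Real.log 2 - 1)
      ≤ Real.log (Real.Gamma ((m : ℝ) + 1 + 1 / 2)) := by
  have hm1 : (1:ℝ) ≤ (m:ℝ) := by exact_mod_cast hm
  have hmpos : (0:ℝ) < m := by linarith
  have hQpos : (0:ℝ) < 2 * (m:ℝ) + 1 := by positivity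
  have hX : Real.log (2 * (m:ℝ) + 1) - Real.log 2 - Real.log m
      = -Real.log (1 - 1/(2 * (m:ℝ) + 1)) := by
    rw [show (1:ℝ) - 1/(2 * (m:ℝ) + 1) = (2 * m) / (2 * (m:ℝ) + 1) by field_simp; ring,
      Real.log_div (by positivity) (by positivity), Real.log_mul (by norm_num) (by positivity)]
    ring
  have hser := aux_log_one_sub_lb (t := 1/(2 * (m:ℝ) + 1)) (by positivity)
    (by rw [div_lt_one hQpos]; linarith)
  rw [← hX] at hser
  have hkey : 1/2 + 1/(4*(2 * (m:ℝ) + 1)) ≤ ((2 * (m:ℝ) + 1)/2) *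
      (Real.log (2 * (m:ℝ) + 1) - Real.log 2 - Real.log m) := by
    have h2 := mul_le_mul_of_nonneg_left hser (by positivity : (0:ℝ) ≤ (2 * (m:ℝ) + 1)/2)
    have h3 : ((2 * (m:ℝ) + 1)/2) * (1/(2 * (m:ℝ) + 1) + (1/(2 * (m:ℝ) + 1))^2/2)
        = 1/2 + 1/(4*(2 * (m:ℝ) + 1)) := by field_simp; ring
    linarith
  have hkey2 : 1/(12 * (m:ℝ)) ≤ 1/(4*(2 * (m:ℝ) + 1)) := by
    apply one_div_le_one_div_of_le (by positivity)
    linarith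
  have hq := stirling_log_lb (2*m+1) (by omega)
  have hmu := stirling_log_ub m hm
  rw [log_gamma_odd m]
  push_cast at hq hmu ⊢
  rw [show Real.log (2 * (2 * (m:ℝ) + 1)) = Real.log 2 + Real.log (2 * (m:ℝ) + 1) from
    Real.log_mul (by norm_num) (by positivity)] at hq
  rw [show Real.log (2 * (m:ℝ)) = Real.log 2 + Real.log m from
    Real.log_mul (by norm_num) (by positivity)] at hmu
  ring_nf at hq hmu hkey hkey2 ⊢
  linarith [hq, hmu, hkey, hkey2]

lemma LM2_odd (m : ℕ) (hm : 1 ≤ m) :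
    Real.log (Real.Gamma ((m : ℝ) + 1 + 1 / 2)) ≤
      Real.log π / 2 + Real.log ((2 * m + 1 : ℕ) : ℝ) / 2
      + (((2 * m + 1 : ℕ) : ℝ) / 2) * (Real.log ((2 * m + 1 : ℕ) : ℝ) - Real.log 2 - 1)
      - Real.log (1 - 1 / ((2 * m + 1 : ℕ) : ℝ)) := by
  have hm1 : (1:ℝ) ≤ (m:ℝ) := by exact_mod_cast hm
  have hmpos : (0:ℝ) < m := by linarith
  have hQpos : (0:ℝ) < 2 * (m:ℝ) + 1 := by positivity
  have hX : Real.log (2 * (m:ℝ) + 1) - Real.log 2 - Real.log m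
      = -Real.log (1 - 1/(2 * (m:ℝ) + 1)) := by
    rw [show (1:ℝ) - 1/(2 * (m:ℝ) + 1) = (2 * m) / (2 * (m:ℝ) + 1) by field_simp; ring,
      Real.log_div (by positivity) (by positivity), Real.log_mul (by norm_num) (by positivity)]
    ring
  -- upper bound on X = log(1+1/(2m)) : X ≤ 1/(2m)
  have hXub : Real.log (2 * (m:ℝ) + 1) - Real.log 2 - Real.log m ≤ 1/(2*(m:ℝ)) := by
    have : Real.log (2 * (m:ℝ) + 1) - Real.log 2 - Real.log m
        = Real.log ((2 * (m:ℝ) + 1) / (2 * m)) := by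
      rw [Real.log_div (by positivity) (by positivity),
        Real.log_mul (by norm_num) (by positivity)]; ring
    rw [this]
    have h := Real.log_le_sub_one_of_pos (x := (2 * (m:ℝ) + 1) / (2 * m)) (by positivity)
    have h2 : (2 * (m:ℝ) + 1) / (2 * m) - 1 = 1/(2*(m:ℝ)) := by field_simp; ring
    linarith
  have hXnn : 0 ≤ Real.log (2 * (m:ℝ) + 1) - Real.log 2 - Real.log m := by
    rw [hX, neg_nonneg]
    apply Real.log_nonpos
    · rw [sub_nonneg]; rw [div_le_one hQpos]; linarith
    · rw [sub_le_self_iff]; positivity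
  have hq := stirling_log_ub (2*m+1) (by omega)
  have hmu := stirling_log_lb m hm
  rw [log_gamma_odd m]
  push_cast at hq hmu ⊢
  rw [show Real.log (2 * (2 * (m:ℝ) + 1)) = Real.log 2 + Real.log (2 * (m:ℝ) + 1) from
    Real.log_mul (by norm_num) (by positivity)] at hq
  rw [show Real.log (2 * (m:ℝ)) = Real.log 2 + Real.log m from
    Real.log_mul (by norm_num) (by positivity)] at hmu
  -- key: ((2m-1)/2) * X ≤ 1/2 - 1/(12(2m+1))
  have hkey : ((2*(m:ℝ) - 1)/2) * (Real.log (2 * (m:ℝ) + 1) - Real.log 2 - Real.log m)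
      ≤ 1/2 - 1/(12*(2*(m:ℝ)+1)) := by
    have h2 := mul_le_mul_of_nonneg_left hXub (by linarith : (0:ℝ) ≤ (2*(m:ℝ) - 1)/2)
    have h3 : ((2*(m:ℝ) - 1)/2) * (1/(2*(m:ℝ))) = 1/2 - 1/(4*(m:ℝ)) := by field_simp; ring
    have h4 : 1/(12*(2*(m:ℝ)+1)) ≤ 1/(4*(m:ℝ)) := by
      apply one_div_le_one_div_of_le (by positivity); linarith
    linarith
  ring_nf at hq hmu hkey hX ⊢
  linarith [hq, hmu, hkey, hX]

lemma LM1_even (m : ℕ) (hm : 1 ≤ m) :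
    Real.log π / 2 + Real.log ((2 * m : ℕ) : ℝ) / 2
      + (((2 * m : ℕ) : ℝ) / 2) * (Real.log ((2 * m : ℕ) : ℝ) - Real.log 2 - 1)
      ≤ Real.log (Real.Gamma ((m : ℝ) + 1)) := by
  have hm1 : (1:ℝ) ≤ (m:ℝ) := by exact_mod_cast hm
  have hmpos : (0:ℝ) < m := by linarith
  rw [Real.Gamma_nat_eq_factorial m]
  have hb := stirling_log_lb m hm
  push_cast at hb ⊢
  rw [show Real.log (2 * (m:ℝ)) = Real.log 2 + Real.log m from
    Real.log_mul (by norm_num) (by positivity)] at hb ⊢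
  ring_nf at hb ⊢
  linarith

lemma LM2_even (m : ℕ) (hm : 1 ≤ m) :
    Real.log (Real.Gamma ((m : ℝ) + 1)) ≤
      Real.log π / 2 + Real.log ((2 * m : ℕ) : ℝ) / 2
      + (((2 * m : ℕ) : ℝ) / 2) * (Real.log ((2 * m : ℕ) : ℝ) - Real.log 2 - 1)
      - Real.log (1 - 1 / ((2 * m : ℕ) : ℝ)) := by
  have hm1 : (1:ℝ) ≤ (m:ℝ) := by exact_mod_cast hm
  have hmpos : (0:ℝ) < m := by linarith
  rw [Real.Gamma_nat_eq_factorial m]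
  have hb := stirling_log_ub m hm
  have hlog : Real.log (1 - 1 / ((2 * m : ℕ) : ℝ)) ≤ -(1/(2*(m:ℝ))) := by
    push_cast
    have h := Real.log_le_sub_one_of_pos (x := 1 - 1/(2*(m:ℝ))) (by
      have : 1/(2*(m:ℝ)) ≤ 1/2 := by
        apply one_div_le_one_div_of_le (by norm_num); linarith
      linarith)
    linarith
  have h12 : 1/(12*(m:ℝ)) ≤ 1/(2*(m:ℝ)) := by
    apply one_div_le_one_div_of_le (by positivity); linarith
  push_cast at hb hlog ⊢
  rw [show Real.log (2 * (m:ℝ)) = Real.log 2 + Real.log m from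
    Real.log_mul (by norm_num) (by positivity)] at hb ⊢
  ring_nf at hb hlog h12 ⊢
  linarith

lemma LM1_one :
    Real.log π / 2 + Real.log ((1 : ℕ) : ℝ) / 2
      + (((1 : ℕ) : ℝ) / 2) * (Real.log ((1 : ℕ) : ℝ) - Real.log 2 - 1)
      ≤ Real.log (Real.Gamma (((0:ℕ) : ℝ) + 1 + 1 / 2)) := by
  rw [log_gamma_odd 0]
  have h2 : Real.log 2 ≤ 1 := by
    have := Real.log_le_sub_one_of_pos (x := 2) (by norm_num); linarith
  simp [Nat.factorial]
  linarith [Real.log_nonneg (by norm_num : (1:ℝ) ≤ 2)]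

/-- The Lebesgue volume `|Dₙ| = π^{n/2}/Γ(n/2+1)` of the closed Euclidean unit ball
in `ℝⁿ`. -/
noncomputable def unitBallVolume (n : ℕ) : ℝ :=
  (volume (Metric.closedBall (0 : EuclideanSpace ℝ (Fin n)) 1)).toReal


lemma master1 (n : ℕ) (hn : 1 ≤ n) :
    Real.log π / 2 + Real.log (n : ℝ) / 2
      + ((n : ℝ) / 2) * (Real.log (n : ℝ) - Real.log 2 - 1)
      ≤ Real.log (Real.Gamma ((n : ℝ) / 2 + 1)) := by
  rcases Nat.even_or_odd n with ⟨m, rfl⟩ | ⟨m, rfl⟩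
  · have hm : 1 ≤ m := by omega
    rw [show ((m + m : ℕ) : ℝ) / 2 + 1 = (m : ℝ) + 1 by push_cast; ring,
      show (m + m : ℕ) = 2 * m by omega]
    exact LM1_even m hm
  · rcases Nat.eq_zero_or_pos m with rfl | hm
    · rw [show ((2 * 0 + 1 : ℕ) : ℝ) / 2 + 1 = ((0 : ℕ) : ℝ) + 1 + 1 / 2 by push_cast; ring]
      exact LM1_one
    · rw [show ((2 * m + 1 : ℕ) : ℝ) / 2 + 1 = (m : ℝ) + 1 + 1 / 2 by push_cast; ring]
      exact LM1_odd m hm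

lemma master2 (n : ℕ) (hn : 2 ≤ n) :
    Real.log (Real.Gamma ((n : ℝ) / 2 + 1)) ≤
      Real.log π / 2 + Real.log (n : ℝ) / 2
      + ((n : ℝ) / 2) * (Real.log (n : ℝ) - Real.log 2 - 1)
      - Real.log (1 - 1 / (n : ℝ)) := by
  rcases Nat.even_or_odd n with ⟨m, rfl⟩ | ⟨m, rfl⟩
  · have hm : 1 ≤ m := by omega
    rw [show ((m + m : ℕ) : ℝ) / 2 + 1 = (m : ℝ) + 1 by push_cast; ring,
      show (m + m : ℕ) = 2 * m by omega]
    exact LM2_even m hm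
  · have hm : 1 ≤ m := by omega
    rw [show ((2 * m + 1 : ℕ) : ℝ) / 2 + 1 = (m : ℝ) + 1 + 1 / 2 by push_cast; ring]
    exact LM2_odd m hm


lemma unitBallVolume_eq (n : ℕ) (hn : 1 ≤ n) :
    unitBallVolume n = Real.sqrt π ^ n / Real.Gamma ((n : ℝ) / 2 + 1) := by
  haveI : Nonempty (Fin n) := Fin.pos_iff_nonempty.mp (by omega)
  rw [unitBallVolume, EuclideanSpace.volume_closedBall (Fin n) 0 1, Fintype.card_fin]
  simp only [ENNReal.ofReal_one, one_pow, one_mul]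
  rw [ENNReal.toReal_ofReal]
  positivity

/-- For every `n ≥ 1`,
`(1/√(πn)) (2πe/n)^{n/2} (1 - 1/n) ≤ |Dₙ| ≤ (1/√(πn)) (2πe/n)^{n/2}`. -/
theorem stmt12 (n : ℕ) (hn : 1 ≤ n) :
    1 / Real.sqrt (Real.pi * n) * (2 * Real.pi * Real.exp 1 / n) ^ ((n : ℝ) / 2)
        * (1 - 1 / (n : ℝ))
      ≤ unitBallVolume n
    ∧ unitBallVolume n
      ≤ 1 / Real.sqrt (Real.pi * n) * (2 * Real.pi * Real.exp 1 / n) ^ ((n : ℝ) / 2) := by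
  have hnR : (1 : ℝ) ≤ (n : ℝ) := by exact_mod_cast hn
  have hnpos : (0 : ℝ) < n := by linarith
  have hΓpos : 0 < Real.Gamma ((n : ℝ) / 2 + 1) := Real.Gamma_pos_of_pos (by positivity)
  have hvol : 0 < unitBallVolume n := by
    rw [unitBallVolume_eq n hn]
    have : (0:ℝ) < Real.sqrt π := Real.sqrt_pos.mpr Real.pi_pos
    positivity
  have hbase : (0:ℝ) < 2 * π * Real.exp 1 / n := by
    have := Real.pi_pos; positivity
  have hT : (0:ℝ) < 1 / Real.sqrt (π * n) * (2 * π * Real.exp 1 / n) ^ ((n : ℝ) / 2) := by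
    have h1 : (0:ℝ) < Real.sqrt (π * n) := Real.sqrt_pos.mpr (by positivity)
    have h2 : (0:ℝ) < (2 * π * Real.exp 1 / n) ^ ((n : ℝ) / 2) := Real.rpow_pos_of_pos hbase _
    positivity
  -- log of the target quantity
  have hlogT : Real.log (1 / Real.sqrt (π * n) * (2 * π * Real.exp 1 / n) ^ ((n : ℝ) / 2))
      = -(Real.log π + Real.log n) / 2
        + ((n : ℝ) / 2) * (Real.log 2 + Real.log π + 1 - Real.log n) := by
    rw [Real.log_mul (by positivity) (by positivity : ((2 * π * Real.exp 1 / n : ℝ)) ^ ((n:ℝ)/2) ≠ 0),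
      one_div, Real.log_inv, Real.log_sqrt (by positivity),
      Real.log_mul (by positivity) (by positivity),
      Real.log_rpow hbase,
      Real.log_div (by positivity) (by positivity),
      Real.log_mul (by positivity) (Real.exp_ne_zero 1),
      Real.log_mul (by norm_num) (by positivity), Real.log_exp]
    ring
  have hlogV : Real.log (unitBallVolume n)
      = (n : ℝ) * (Real.log π / 2) - Real.log (Real.Gamma ((n : ℝ) / 2 + 1)) := by
    rw [unitBallVolume_eq n hn, Real.log_div (by positivity) (by positivity), Real.log_pow,
      Real.log_sqrt Real.pi_pos.le]
  constructor
  · -- lower bound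
    rcases Nat.lt_or_ge n 2 with h2 | h2
    · interval_cases n
      · norm_num
        exact hvol.le
    · have hfrac : (0:ℝ) < 1 - 1 / (n : ℝ) := by
        have hn2 : (2:ℝ) ≤ (n:ℝ) := by exact_mod_cast h2
        have : 1 / (n:ℝ) ≤ 1/2 := by apply one_div_le_one_div_of_le <;> linarith
        linarith
      rw [← Real.log_le_log_iff (by positivity) hvol]
      rw [Real.log_mul (by positivity) hfrac.ne', hlogT, hlogV]
      have hM := master2 n h2
      linarith
  · rw [← Real.log_le_log_iff hvol hT, hlogT, hlogV]
    have hM := master1 n hn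
    linarith
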